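/- Let i ∈ I and θ = (θ_i) ∈ ℝ^I with θ_i < 0, let V be a θ-stable point of P_{v,w}, and let V̄ be its reflected collection. Let Ū be a subrepresentation of V̄ that contains Im A (i.e. it contains the images of all maps A_j for j ≠ i and of all maps Ā_i). Define a collection U of subspaces of V by U_j^b := Ū_j^b for j ≠ i and U_i^b := Φ_i^{b−d_{ii}}( W_i^{b−d_i} ⊕ ⨁_{j≠i} ⨁_{ℓ∈L(i,j)} Ū_j^{b+(ℓ−1)d_{ii}} ). Then U is a subrepresentation of V containing Im A, and 0 ≤ (θ, v − dim U) ≤ (s_i(θ), S_i(v) − dim Ū). In particular, every subrepresentation of V̄ containing Im A satisfies the second θ-stability inequality for the stability parameter s_i(θ) and dimension vector S_i(v). -/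

import Mathlib

/- Common setup: (graded, generalized) quiver varieties attached to a symmetrized
Cartan matrix, following Neguț, "Extremal monomials of q-characters". -/

open Module LinearMap Finset

namespace QChar

variable {I : Type} [Fintype I] [DecidableEq I]

/-- The Cartan integer `c_{ij} = 2 d_{ij} / d_{ii}`. -/
def cc (d : I → I → ℤ) (i j : I) : ℤ := 2 * d i j / d i i

/-- `d_i = d_{ii} / 2`. -/
def dl (d : I → I → ℤ) (i : I) : ℤ := d i i / 2

/-- The number `−c_{ij}` (as a natural number), i.e. the cardinality of `L(i,j)`. -/
def cnat (d : I → I → ℤ) (i j : I) : ℕ := (-(cc d i j)).toNat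

/-- The assumptions on the symmetrized Cartan matrix `d = (d_{ij})`. -/
structure CartanData (d : I → I → ℤ) : Prop where
  symm : ∀ i j, d i j = d j i
  pos : ∀ i, 0 < d i i
  even : ∀ i, Even (d i i)
  offdiag : ∀ i j, i ≠ j → d i j ≤ 0
  dvd : ∀ i j, d i i ∣ 2 * d i j

/-- `ℓ`-fold composition of a linear endomap (the maps `x_{i,i}^{(ℓ),a}`). -/
def lpow {M : Type} [AddCommGroup M] [Module ℂ M] (f : M →ₗ[ℂ] M) : ℕ → M →ₗ[ℂ] M
  | 0 => LinearMap.id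
  | n + 1 => f ∘ₗ lpow f n

section Rep

variable (d : I → I → ℤ) (v w : I → ℤ → ℕ)
    (Vt : I → Type) [∀ i, AddCommGroup (Vt i)] [∀ i, Module ℂ (Vt i)]
    (Wt : I → Type) [∀ i, AddCommGroup (Wt i)] [∀ i, Module ℂ (Wt i)]
    (Vg : ∀ i : I, ℤ → Submodule ℂ (Vt i)) (Wg : ∀ i : I, ℤ → Submodule ℂ (Wt i))
    (x : ∀ j i : I, Vt i →ₗ[ℂ] Vt j) (A : ∀ i : I, Wt i →ₗ[ℂ] Vt i)
    (B : ∀ i : I, Vt i →ₗ[ℂ] Wt i)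

/-- A point of `P_{v,w}` : each total space `Vt i = ⊕_a V_i^a`, `Wt i = ⊕_a W_i^a` is the
internal direct sum of its graded pieces, `dim V_i^a = v_i^a`, `dim W_i^a = w_i^a`, the maps
`x_{j,i} : V_i^a → V_j^{a-d_{ij}}`, `A_i : W_i^a → V_i^{a+d_i}`, `B_i : V_i^{a-d_i} → W_i^a`
respect the gradings, and the relations (R1), (R2), (R3), (R4) hold. -/
def IsRep : Prop :=
  (∀ i, FiniteDimensional ℂ (Vt i)) ∧
  (∀ i, FiniteDimensional ℂ (Wt i)) ∧
  (∀ i, DirectSum.IsInternal (Vg i)) ∧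
  (∀ i, DirectSum.IsInternal (Wg i)) ∧
  (∀ i a, Module.finrank ℂ (Vg i a) = v i a) ∧
  (∀ i a, Module.finrank ℂ (Wg i a) = w i a) ∧
  (∀ j i a, (Vg i a).map (x j i) ≤ Vg j (a - d i j)) ∧
  (∀ i a, (Wg i a).map (A i) ≤ Vg i (a + dl d i)) ∧
  (∀ i a, (Vg i a).map (B i) ≤ Wg i (a + dl d i)) ∧
  (∀ i j, i ≠ j →
    lpow (x j j) (cnat d j i) ∘ₗ x j i + x j i ∘ₗ lpow (x i i) (cnat d i j) = 0) ∧
  (∀ i, (∑ j ∈ Finset.univ.erase i, ∑ ℓ ∈ Finset.range (cnat d i j),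
      lpow (x i i) (cnat d i j - 1 - ℓ) ∘ₗ x i j ∘ₗ x j i ∘ₗ lpow (x i i) ℓ)
      + A i ∘ₗ B i = 0) ∧
  (∀ i, x i i ∘ₗ A i = 0) ∧
  (∀ i, B i ∘ₗ x i i = 0)

/-- A subrepresentation: subspaces `U_i^a ⊆ V_i^a` preserved by all the maps `x`. -/
def IsSubrep (U : ∀ i : I, ℤ → Submodule ℂ (Vt i)) : Prop :=
  (∀ i a, U i a ≤ Vg i a) ∧ (∀ j i a, (U i a).map (x j i) ≤ U j (a - d i j))

/-- The pairing `(θ, u) = ∑_i d_i θ_i u_i`, where `u_i = ∑_a u_i^a`. -/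
noncomputable def pairθ (d : I → I → ℤ) (θ : I → ℝ) (u : I → ℤ → ℤ) : ℝ :=
  ∑ i : I, (dl d i : ℝ) * θ i * ∑ᶠ a : ℤ, (u i a : ℝ)

/-- The dimension vector of a collection of subspaces. -/
noncomputable def dimv (U : ∀ i : I, ℤ → Submodule ℂ (Vt i)) : I → ℤ → ℤ :=
  fun i a => (Module.finrank ℂ (U i a) : ℤ)

/-- `θ`-stability: subrepresentations contained in `Ker B` pair nonpositively with `θ`, and
subrepresentations containing `Im A` satisfy `(θ, v - dim U) ≥ 0`. -/
def IsStable (θ : I → ℝ) : Prop :=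
  (∀ U : ∀ i : I, ℤ → Submodule ℂ (Vt i), IsSubrep d Vt Vg x U →
    (∀ i a, (U i a).map (B i) = ⊥) → pairθ d θ (dimv Vt U) ≤ 0) ∧
  (∀ U : ∀ i : I, ℤ → Submodule ℂ (Vt i), IsSubrep d Vt Vg x U →
    (∀ i a, (Wg i a).map (A i) ≤ U i (a + dl d i)) →
    0 ≤ pairθ d θ (fun i a => (v i a : ℤ) - dimv Vt U i a))

/-- The map `Φ_i : D_i → V_i` (all `Φ_i^a` at once); the component of the domain indexed by
`(j, k)` (with `k + 1` running through `1, …, −c_{ij}`) is the summand `V_j^{a+ℓ d_{ii}}` of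
`D_i^a`, where `ℓ = c_{ij}/2 + (k+1) ∈ L(i,j)`. -/
noncomputable def Phi (i : I) :
    (Wt i × ((j : I) → Fin (cnat d i j) → Vt j)) →ₗ[ℂ] Vt i :=
  A i ∘ₗ LinearMap.fst ℂ (Wt i) ((j : I) → Fin (cnat d i j) → Vt j) +
  ∑ j : I, ∑ k : Fin (cnat d i j),
    lpow (x i i) (k : ℕ) ∘ₗ x i j ∘ₗ LinearMap.proj k ∘ₗ LinearMap.proj j ∘ₗ
      LinearMap.snd ℂ (Wt i) ((j' : I) → Fin (cnat d i j') → Vt j')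

/-- The graded piece `D_i^a = W_i^{a+d_i} ⊕ ⨁_{j≠i} ⨁_{ℓ∈L(i,j)} V_j^{a+ℓd_{ii}}` of the
domain of `Φ_i`. -/
def Dg (i : I) (a : ℤ) :
    Submodule ℂ (Wt i × ((j : I) → Fin (cnat d i j) → Vt j)) :=
  (Wg i (a + dl d i)).prod
    (Submodule.pi Set.univ fun j => Submodule.pi Set.univ fun k : Fin (cnat d i j) =>
      Vg j (a + d i j + ((k : ℤ) + 1) * d i i))

/-- The map `Ψ_i : V_i → D_i` (all `Ψ_i^a` at once). -/
noncomputable def Psi (i : I) :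
    Vt i →ₗ[ℂ] (Wt i × ((j : I) → Fin (cnat d i j) → Vt j)) :=
  LinearMap.prod (B i)
    (LinearMap.pi fun j => LinearMap.pi fun k : Fin (cnat d i j) =>
      x j i ∘ₗ lpow (x i i) (cnat d i j - 1 - (k : ℕ)))

/-- The map `Υ_i : D_i → D_i` (all `Υ_i^a : D_i^a → D_i^{a - d_{ii}}` at once). -/
noncomputable def Ups (i : I) :
    (Wt i × ((j : I) → Fin (cnat d i j) → Vt j)) →ₗ[ℂ]
      (Wt i × ((j : I) → Fin (cnat d i j) → Vt j)) :=
  LinearMap.prod 0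
    (LinearMap.pi fun j => LinearMap.pi fun k : Fin (cnat d i j) =>
      if (k : ℕ) = 0 then
        -(lpow (x j j) (cnat d j i) ∘ₗ
          LinearMap.proj (⟨cnat d i j - 1, Nat.sub_lt k.pos Nat.one_pos⟩ : Fin (cnat d i j)) ∘ₗ
          LinearMap.proj j ∘ₗ
          LinearMap.snd ℂ (Wt i) ((j' : I) → Fin (cnat d i j') → Vt j'))
      else
        LinearMap.proj (⟨(k : ℕ) - 1, lt_of_le_of_lt (Nat.sub_le _ _) k.isLt⟩ :
            Fin (cnat d i j)) ∘ₗ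
          LinearMap.proj j ∘ₗ
          LinearMap.snd ℂ (Wt i) ((j' : I) → Fin (cnat d i j') → Vt j'))

/-- The (ambient representative of the) map `x̄_{j,i} : V̄_i^a → V_j^{a-d_{ij}}`, i.e. the
projection of `D_i^a` onto its summand `V_j^{a-d_{ij}}` (the one with `ℓ = -c_{ij}/2`). -/
noncomputable def prj (i j : I) :
    (Wt i × ((j' : I) → Fin (cnat d i j') → Vt j')) →ₗ[ℂ] Vt j :=
  if h : 0 < cnat d i j then
    LinearMap.proj (⟨cnat d i j - 1, Nat.sub_lt h Nat.one_pos⟩ : Fin (cnat d i j)) ∘ₗ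
      LinearMap.proj j ∘ₗ LinearMap.snd ℂ (Wt i) ((j' : I) → Fin (cnat d i j') → Vt j')
  else 0

/-- The operation `S_i` on dimension vectors (depending on `w`), cf. the braid group action
on monomials. -/
def SS (d : I → I → ℤ) (w : I → ℤ → ℕ) (i : I) (u : I → ℤ → ℤ) : I → ℤ → ℤ := fun j a =>
  if j = i then
    (w i (a + dl d i) : ℤ) +
      (∑ j' ∈ Finset.univ.erase i, ∑ k ∈ Finset.range (cnat d i j'),
        u j' (a + d i j' + ((k : ℤ) + 1) * d i i)) -
      u i (a + d i i)
  else u j a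

/-- The simple reflection `s_i` on stability parameters. -/
def sref (d : I → I → ℤ) (i : I) (θ : I → ℝ) : I → ℝ := fun j => θ j - (cc d j i : ℝ) * θ i

/-- A subrepresentation `Ū` of the reflected collection `V̄`, described in ambient terms:
`Ū_j^a = Uo j a ⊆ V_j^a` for `j ≠ i`, while `Ū_i^a = Ui a ⊆ Ker Φ_i^a = D_i^a ⊓ Ker Φ_i`. -/
def BarSubrep (i : I) (Uo : ∀ j : I, ℤ → Submodule ℂ (Vt j))
    (Ui : ℤ → Submodule ℂ (Wt i × ((j : I) → Fin (cnat d i j) → Vt j))) : Prop :=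
  (∀ a, Ui a ≤ Dg d Vt Wt Vg Wg i a ⊓ LinearMap.ker (Phi d Vt Wt x A i)) ∧
  (∀ j, j ≠ i → ∀ a, Uo j a ≤ Vg j a) ∧
  (∀ j j', j ≠ i → j' ≠ i → ∀ a, (Uo j' a).map (x j j') ≤ Uo j (a - d j' j)) ∧
  (∀ j, j ≠ i → ∀ a, (Ui a).map (prj d Vt Wt i j) ≤ Uo j (a - d i j)) ∧
  (∀ j, j ≠ i → ∀ a,
    (Uo j (a + d i j)).map (Psi d Vt Wt x B i ∘ₗ x i j) ≤ Ui a) ∧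
  (∀ a, (Ui a).map (Ups d Vt Wt x i) ≤ Ui (a - d i i))

/-- The dimension vector of a subrepresentation of the reflected collection. -/
noncomputable def dimbar (i : I) (Uo : ∀ j : I, ℤ → Submodule ℂ (Vt j))
    (Ui : ℤ → Submodule ℂ (Wt i × ((j : I) → Fin (cnat d i j) → Vt j))) : I → ℤ → ℤ :=
  fun j a => if j = i then (Module.finrank ℂ (Ui a) : ℤ)
    else (Module.finrank ℂ (Uo j a) : ℤ)

/-- The reflected collection `V̄` (with `V̄_i^a = Ker Φ_i^a`, all other data as described) is a
point of `P_{v̄,w}`: the grading of `Ker Φ_i` is an internal direct sum, the reflected maps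
respect the gradings, and the relations (R1)-(R4) hold for the reflected maps. -/
def BarPoint (i : I) : Prop :=
  FiniteDimensional ℂ (LinearMap.ker (Phi d Vt Wt x A i)) ∧
  DirectSum.IsInternal (fun a : ℤ =>
    (Dg d Vt Wt Vg Wg i a).comap (LinearMap.ker (Phi d Vt Wt x A i)).subtype) ∧
  (∀ j, j ≠ i → ∀ a,
    ((Dg d Vt Wt Vg Wg i a ⊓ LinearMap.ker (Phi d Vt Wt x A i)).map (prj d Vt Wt i j))
      ≤ Vg j (a - d i j)) ∧
  (∀ j, j ≠ i → ∀ a,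
    (Vg j (a + d i j)).map (Psi d Vt Wt x B i ∘ₗ x i j)
      ≤ Dg d Vt Wt Vg Wg i a ⊓ LinearMap.ker (Phi d Vt Wt x A i)) ∧
  (∀ a, ((Dg d Vt Wt Vg Wg i a ⊓ LinearMap.ker (Phi d Vt Wt x A i)).map (Ups d Vt Wt x i))
      ≤ Dg d Vt Wt Vg Wg i (a - d i i) ⊓ LinearMap.ker (Phi d Vt Wt x A i)) ∧
  (∀ a, ((Wg i a).map (Psi d Vt Wt x B i ∘ₗ A i))
      ≤ Dg d Vt Wt Vg Wg i (a + dl d i) ⊓ LinearMap.ker (Phi d Vt Wt x A i)) ∧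
  (∀ a, ((Dg d Vt Wt Vg Wg i a ⊓ LinearMap.ker (Phi d Vt Wt x A i)).map
      (LinearMap.fst ℂ (Wt i) ((j : I) → Fin (cnat d i j) → Vt j)))
      ≤ Wg i (a + dl d i)) ∧
  -- (R1), case of the pair (j, i) with j ≠ i
  (∀ j, j ≠ i → ∀ u ∈ LinearMap.ker (Phi d Vt Wt x A i),
    lpow (x j j) (cnat d j i) (prj d Vt Wt i j u) +
      prj d Vt Wt i j (lpow (Ups d Vt Wt x i) (cnat d i j) u) = 0) ∧
  -- (R1), case of the pair (i, j) with j ≠ i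
  (∀ j, j ≠ i →
    lpow (Ups d Vt Wt x i) (cnat d i j) ∘ₗ (Psi d Vt Wt x B i ∘ₗ x i j) +
      (Psi d Vt Wt x B i ∘ₗ x i j) ∘ₗ lpow (x j j) (cnat d j i) = 0) ∧
  -- (R1), case of a pair (j, j') not involving i
  (∀ j j', j ≠ i → j' ≠ i → j ≠ j' →
    lpow (x j j) (cnat d j j') ∘ₗ x j j' + x j j' ∘ₗ lpow (x j' j') (cnat d j' j) = 0) ∧
  -- (R2) at the vertex i
  (∀ u ∈ LinearMap.ker (Phi d Vt Wt x A i),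
    (∑ j ∈ Finset.univ.erase i, ∑ ℓ ∈ Finset.range (cnat d i j),
      lpow (Ups d Vt Wt x i) (cnat d i j - 1 - ℓ)
        ((Psi d Vt Wt x B i ∘ₗ x i j)
          (prj d Vt Wt i j (lpow (Ups d Vt Wt x i) ℓ u)))) +
      Psi d Vt Wt x B i
        (A i ((LinearMap.fst ℂ (Wt i) ((j : I) → Fin (cnat d i j) → Vt j)) u)) = 0) ∧
  -- (R2) at a vertex j ≠ i
  (∀ j, j ≠ i →
    (∑ j' ∈ Finset.univ.erase j, ∑ ℓ ∈ Finset.range (cnat d j j'),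
      (if j' = i then
        lpow (x j j) (cnat d j j' - 1 - ℓ) ∘ₗ prj d Vt Wt i j ∘ₗ
          Psi d Vt Wt x B i ∘ₗ x i j ∘ₗ lpow (x j j) ℓ
      else
        lpow (x j j) (cnat d j j' - 1 - ℓ) ∘ₗ x j j' ∘ₗ x j' j ∘ₗ lpow (x j j) ℓ)) +
      A j ∘ₗ B j = 0) ∧
  -- (R3) at the vertex i
  (Ups d Vt Wt x i ∘ₗ (Psi d Vt Wt x B i ∘ₗ A i) = 0) ∧
  -- (R3) at a vertex j ≠ i
  (∀ j, j ≠ i → x j j ∘ₗ A j = 0) ∧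
  -- (R4) at the vertex i
  (∀ u ∈ LinearMap.ker (Phi d Vt Wt x A i),
    (LinearMap.fst ℂ (Wt i) ((j : I) → Fin (cnat d i j) → Vt j)) (Ups d Vt Wt x i u) = 0) ∧
  -- (R4) at a vertex j ≠ i
  (∀ j, j ≠ i → B j ∘ₗ x j j = 0)

/-- `θ'`-stability of the reflected collection, in ambient terms. -/
def BarStable (i : I) (θ' : I → ℝ) : Prop :=
  (∀ (Uo : ∀ j : I, ℤ → Submodule ℂ (Vt j))
      (Ui : ℤ → Submodule ℂ (Wt i × ((j : I) → Fin (cnat d i j) → Vt j))),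
    BarSubrep d Vt Wt Vg Wg x A B i Uo Ui →
    (∀ j, j ≠ i → ∀ a, (Uo j a).map (B j) = ⊥) →
    (∀ a, (Ui a).map (LinearMap.fst ℂ (Wt i) ((j : I) → Fin (cnat d i j) → Vt j)) = ⊥) →
    pairθ d θ' (dimbar d Vt Wt i Uo Ui) ≤ 0) ∧
  (∀ (Uo : ∀ j : I, ℤ → Submodule ℂ (Vt j))
      (Ui : ℤ → Submodule ℂ (Wt i × ((j : I) → Fin (cnat d i j) → Vt j))),
    BarSubrep d Vt Wt Vg Wg x A B i Uo Ui →
    (∀ j, j ≠ i → ∀ a, (Wg j a).map (A j) ≤ Uo j (a + dl d j)) →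
    (∀ a, (Wg i a).map (Psi d Vt Wt x B i ∘ₗ A i) ≤ Ui (a + dl d i)) →
    0 ≤ pairθ d θ'
      (fun j a => SS d w i (fun j' b => (v j' b : ℤ)) j a - dimbar d Vt Wt i Uo Ui j a))

end Rep

end QChar

section Helpers
open Function

private lemma finsum_shift (f : ℤ → ℝ) (c : ℤ) : ∑ᶠ a : ℤ, f (a + c) = ∑ᶠ a : ℤ, f a :=
  finsum_comp_equiv (Equiv.addRight c)

private lemma support_shift {f : ℤ → ℝ} (hf : (support f).Finite) (c : ℤ) :
    (support fun a => f (a + c)).Finite := by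
  have h : (support fun a => f (a + c)) = (fun a : ℤ => a + c) ⁻¹' support f := rfl
  rw [h]
  exact hf.preimage (Set.injOn_of_injective (Equiv.addRight c).injective)

private lemma finsum_mono {f g : ℤ → ℝ} (hf : (support f).Finite) (hg : (support g).Finite)
    (h : ∀ a, f a ≤ g a) : ∑ᶠ a, f a ≤ ∑ᶠ a, g a := by
  classical
  have hsf : support f ⊆ ↑(hf.toFinset ∪ hg.toFinset) := by
    intro a ha
    simp only [Finset.coe_union, Set.mem_union, Set.Finite.coe_toFinset]
    exact Or.inl ha
  have hsg : support g ⊆ ↑(hf.toFinset ∪ hg.toFinset) := by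
    intro a ha
    simp only [Finset.coe_union, Set.mem_union, Set.Finite.coe_toFinset]
    exact Or.inr ha
  rw [finsum_eq_sum_of_support_subset f hsf, finsum_eq_sum_of_support_subset g hsg]
  exact Finset.sum_le_sum fun a _ => h a

private lemma support_finsetSum {β : Type*} {s : Finset β} {F : β → ℤ → ℝ}
    (h : ∀ b ∈ s, (support (F b)).Finite) :
    (support fun a => ∑ b ∈ s, F b a).Finite := by
  classical
  induction s using Finset.induction_on with
  | empty => simp
  | insert c s' hb ih =>
    refine Set.Finite.subset ((h c (by simp)).union (ih fun b hb' => h b (by simp [hb']))) ?_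
    intro a ha
    simp only [mem_support, Finset.sum_insert hb] at ha
    by_contra hcon
    simp only [Set.mem_union, mem_support, not_or, not_not] at hcon
    exact ha (by rw [hcon.1, hcon.2, add_zero])

private lemma finsum_finsetSum {β : Type*} {s : Finset β} {F : β → ℤ → ℝ}
    (h : ∀ b ∈ s, (support (F b)).Finite) :
    ∑ᶠ a, ∑ b ∈ s, F b a = ∑ b ∈ s, ∑ᶠ a, F b a := by
  classical
  induction s using Finset.induction_on with
  | empty => simp
  | insert c s' hb ih =>
    rw [Finset.sum_insert hb]
    have h1 := h c (by simp)
    have h2 : (support fun a => ∑ b ∈ s', F b a).Finite :=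
      support_finsetSum (fun b hb' => h b (Finset.mem_insert_of_mem hb'))
    rw [← ih fun b hb' => h b (by simp [hb']), ← finsum_add_distrib h1 h2]
    exact finsum_congr fun a => by rw [Finset.sum_insert hb]

private lemma finsum_sub_distrib' {f g : ℤ → ℝ} (hf : (support f).Finite)
    (hg : (support g).Finite) : ∑ᶠ a, (f a - g a) = (∑ᶠ a, f a) - ∑ᶠ a, g a := by
  have hng : (support fun a => -g a).Finite := by
    refine hg.subset ?_
    intro a ha
    simp only [mem_support] at ha ⊢
    intro h
    exact ha (by rw [h, neg_zero])
  rw [show (fun a => f a - g a) = fun a => f a + -g a from funext fun a => sub_eq_add_neg _ _]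
  rw [finsum_add_distrib hf hng, sub_eq_add_neg]
  congr 1
  exact finsum_neg_distrib g

private lemma lpow_apply_comm {M : Type} [AddCommGroup M] [Module ℂ M]
    (f : M →ₗ[ℂ] M) (n : ℕ) (u : M) :
    QChar.lpow f n (f u) = f (QChar.lpow f n u) := by
  induction n with
  | zero => rfl
  | succ n ih =>
    show f (QChar.lpow f n (f u)) = _
    rw [ih]
    rfl

end Helpers

set_option maxHeartbeats 2000000 in
set_option synthInstance.maxHeartbeats 400000 in
open QChar in
/-- for a `θ`-stable point with `θ_i < 0` and a subrepresentation `Ū` of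
the reflected collection containing `Im A`, the collection `U` with `U_j = Ū_j` for
`j ≠ i` and `U_i^b = Φ_i^{b-d_{ii}}(W_i^{b-d_i} ⊕ ⨁_{j≠i} ⨁_ℓ Ū_j^{b+(ℓ-1)d_{ii}})` is a
subrepresentation of `V` containing `Im A`, and
`0 ≤ (θ, v − dim U) ≤ (s_i(θ), S_i(v) − dim Ū)`. -/
theorem extremal_qchar_stmt8 {I : Type} [Fintype I] [DecidableEq I]
    (d : I → I → ℤ) (v w : I → ℤ → ℕ)
    (Vt : I → Type) [∀ i, AddCommGroup (Vt i)] [∀ i, Module ℂ (Vt i)]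
    (Wt : I → Type) [∀ i, AddCommGroup (Wt i)] [∀ i, Module ℂ (Wt i)]
    (Vg : ∀ i : I, ℤ → Submodule ℂ (Vt i)) (Wg : ∀ i : I, ℤ → Submodule ℂ (Wt i))
    (x : ∀ j i : I, Vt i →ₗ[ℂ] Vt j) (A : ∀ i : I, Wt i →ₗ[ℂ] Vt i)
    (B : ∀ i : I, Vt i →ₗ[ℂ] Wt i)
    (hd : QChar.CartanData d)
    (hv : (Function.support fun p : I × ℤ => v p.1 p.2).Finite)
    (hw : (Function.support fun p : I × ℤ => w p.1 p.2).Finite)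
    (hrep : QChar.IsRep d v w Vt Wt Vg Wg x A B)
    (i : I) (θ : I → ℝ) (hθi : θ i < 0)
    (hstab : QChar.IsStable d v Vt Wt Vg Wg x A B θ)
    (Uo : ∀ j : I, ℤ → Submodule ℂ (Vt j))
    (Ui : ℤ → Submodule ℂ (Wt i × ((j : I) → Fin (QChar.cnat d i j) → Vt j)))
    (hbar : QChar.BarSubrep d Vt Wt Vg Wg x A B i Uo Ui)
    (hImA : ∀ j : I, j ≠ i → ∀ a, (Wg j a).map (A j) ≤ Uo j (a + QChar.dl d j))
    (hImAi : ∀ a, (Wg i a).map (QChar.Psi d Vt Wt x B i ∘ₗ A i) ≤ Ui (a + QChar.dl d i))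
    (U : ∀ j : I, ℤ → Submodule ℂ (Vt j))
    (hUo : ∀ j : I, j ≠ i → U j = Uo j)
    (hUi : ∀ b : ℤ, U i b =
      ((Wg i ((b - d i i) + QChar.dl d i)).prod
        (Submodule.pi Set.univ fun j => Submodule.pi Set.univ
          fun k : Fin (QChar.cnat d i j) =>
            Uo j ((b - d i i) + d i j + ((k : ℤ) + 1) * d i i))).map
        (QChar.Phi d Vt Wt x A i)) :
    QChar.IsSubrep d Vt Vg x U ∧
    (∀ j a, (Wg j a).map (A j) ≤ U j (a + QChar.dl d j)) ∧
    0 ≤ QChar.pairθ d θ (fun j a => (v j a : ℤ) - QChar.dimv Vt U j a) ∧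
    QChar.pairθ d θ (fun j a => (v j a : ℤ) - QChar.dimv Vt U j a)
      ≤ QChar.pairθ d (QChar.sref d i θ)
          (fun j a => QChar.SS d w i (fun j' b => (v j' b : ℤ)) j a
            - QChar.dimbar d Vt Wt i Uo Ui j a) := by
  classical
  obtain ⟨hVfin, hWfin, hVint, hWint, hvdim, hwdim, hxg, hAg, hBg, hR1, hR2, hR3, hR4⟩ := hrep
  obtain ⟨hUiD, hUoV, hUoX, hprjUo, hpsiUi, hupsUi⟩ := hbar
  have hdne : ∀ j, d j j ≠ 0 := fun j => (hd.pos j).ne'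
  have h2dl : ∀ j, 2 * dl d j = d j j := by
    intro j; obtain ⟨r, hr⟩ := hd.even j
    simp only [QChar.dl, hr]; omega
  have hccmul : ∀ j k, cc d j k * d j j = 2 * d j k := fun j k =>
    Int.ediv_mul_cancel (hd.dvd j k)
  have hccii : ∀ j, cc d j j = 2 := by
    intro j
    have h := hccmul j j
    exact mul_right_cancel₀ (hdne j) (by linarith)
  have hcnatii : ∀ j, cnat d j j = 0 := by
    intro j; simp [QChar.cnat, hccii]
  have hccnonpos : ∀ j k, j ≠ k → cc d j k ≤ 0 := by
    intro j k hjk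
    have h1 := hccmul j k
    have h2 := hd.offdiag j k hjk
    nlinarith [hd.pos j]
  have hcnat_cast : ∀ j k, j ≠ k → (cnat d j k : ℤ) = -cc d j k := by
    intro j k h
    simp [QChar.cnat, Int.toNat_of_nonneg (by linarith [hccnonpos j k h] : (0:ℤ) ≤ -cc d j k)]
  have hcc0 : ∀ j k, cc d j k = 0 → d j k = 0 := by
    intro j k h
    have h2 := hccmul j k
    rw [h] at h2; omega
  have hcnat0 : ∀ j k, j ≠ k → cnat d j k = 0 → d j k = 0 := by
    intro j k h h0
    have h2 := hcnat_cast j k h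
    rw [h0] at h2
    exact hcc0 j k (by omega)
  have hdlcc : ∀ j k, (dl d j) * cc d j k = d j k := by
    intro j k
    have h1 := hccmul j k
    have h2 := h2dl j
    have h3 : 2 * (dl d j * cc d j k) = 2 * d j k := by
      calc 2 * (dl d j * cc d j k) = cc d j k * (2 * dl d j) := by ring
      _ = cc d j k * d j j := by rw [h2]
      _ = 2 * d j k := h1
    omega
  have hdsymm : ∀ j k, d j k = d k j := hd.symm
  have hcnat_symm0 : ∀ j k, j ≠ k → cnat d j k = 0 → cnat d k j = 0 := by
    intro j k h h0
    have hd0 : d j k = 0 := hcnat0 j k h h0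
    have : cc d k j = 0 := by
      have h2 := hccmul k j
      rw [← hdsymm j k, hd0] at h2
      simp only [mul_zero] at h2
      rcases mul_eq_zero.1 h2 with h3 | h3
      · omega
      · exact absurd h3 (hdne k)
    simp [QChar.cnat, this]
  have hlpowg : ∀ j (n : ℕ) a, (Vg j a).map (lpow (x j j) n) ≤ Vg j (a - n * d j j) := by
    intro j n
    induction n with
    | zero => intro a; simp [QChar.lpow]
    | succ n ih =>
      intro a
      have he : lpow (x j j) (n+1) = x j j ∘ₗ lpow (x j j) n := rfl
      rw [he, Submodule.map_comp]
      refine le_trans (Submodule.map_mono (ih a)) (le_trans (hxg j j _) (le_of_eq ?_))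
      congr 1
      push_cast
      ring
  set Φ := Phi d Vt Wt x A i with hΦdef
  set Ψ := Psi d Vt Wt x B i with hΨdef
  set Υ := Ups d Vt Wt x i with hΥdef
  set Pm : ℤ → Submodule ℂ (Wt i × ((j : I) → Fin (cnat d i j) → Vt j)) := fun a =>
    (Wg i (a + dl d i)).prod
      (Submodule.pi Set.univ fun j => Submodule.pi Set.univ fun k : Fin (cnat d i j) =>
        Uo j (a + d i j + ((k : ℤ) + 1) * d i i)) with hPmdef
  have hUiPm : ∀ b, U i b = (Pm (b - d i i)).map Φ := hUi
  have hPmMem : ∀ a p, p ∈ Pm a ↔ (p.1 ∈ Wg i (a + dl d i) ∧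
      ∀ j (k : Fin (cnat d i j)), p.2 j k ∈ Uo j (a + d i j + ((k : ℤ) + 1) * d i i)) := by
    intro a p
    simp [hPmdef, Submodule.mem_prod, Submodule.mem_pi]
  have hPhiApp : ∀ p : Wt i × ((j : I) → Fin (cnat d i j) → Vt j),
      Φ p = A i p.1 + ∑ j : I, ∑ k : Fin (cnat d i j), lpow (x i i) (k : ℕ) (x i j (p.2 j k)) := by
    intro p
    simp [hΦdef, QChar.Phi, LinearMap.sum_apply]
  have hPsiApp2 : ∀ u j (k : Fin (cnat d i j)),
      (Ψ u).2 j k = x j i (lpow (x i i) (cnat d i j - 1 - (k : ℕ)) u) := fun u j k => rfl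
  have hUpsApp2 : ∀ p j (k : Fin (cnat d i j)), (Υ p).2 j k =
      if (k : ℕ) = 0 then
        -(lpow (x j j) (cnat d j i) (p.2 j ⟨cnat d i j - 1, Nat.sub_lt k.pos Nat.one_pos⟩))
      else p.2 j ⟨(k : ℕ) - 1, lt_of_le_of_lt (Nat.sub_le _ _) k.isLt⟩ := by
    intro p j k
    simp only [hΥdef, QChar.Ups, LinearMap.prod_apply, LinearMap.pi_apply, Function.prod]
    split <;> rfl
  have hprjApp : ∀ j (h : 0 < cnat d i j) p,
      prj d Vt Wt i j p = p.2 j ⟨cnat d i j - 1, Nat.sub_lt h Nat.one_pos⟩ := by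
    intro j h p
    simp [QChar.prj, dif_pos h]
  have hx0 : ∀ j, j ≠ i → cnat d i j = 0 → x j i = 0 ∧ x i j = 0 := by
    intro j hj h0
    have h0' : cnat d j i = 0 := hcnat_symm0 i j (Ne.symm hj) h0
    constructor
    · have hr := hR1 i j (Ne.symm hj)
      rw [h0, h0'] at hr
      simp only [QChar.lpow, LinearMap.id_comp, LinearMap.comp_id] at hr
      ext u
      have h2 := LinearMap.congr_fun hr u
      simp only [LinearMap.add_apply, LinearMap.zero_apply] at h2
      have h3 : (2 : ℂ) • (x j i) u = 0 := by rw [two_smul]; exact h2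
      simpa using (smul_eq_zero.mp h3).resolve_left two_ne_zero
    · have hr := hR1 j i hj
      rw [h0, h0'] at hr
      simp only [QChar.lpow, LinearMap.id_comp, LinearMap.comp_id] at hr
      ext u
      have h2 := LinearMap.congr_fun hr u
      simp only [LinearMap.add_apply, LinearMap.zero_apply] at h2
      have h3 : (2 : ℂ) • (x i j) u = 0 := by rw [two_smul]; exact h2
      simpa using (smul_eq_zero.mp h3).resolve_left two_ne_zero
  have hPsiX : ∀ u, Ψ (x i i u) = Υ (Ψ u) := by
    intro u
    refine Prod.ext ?_ (funext fun j => funext fun k => ?_)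
    · show B i (x i i u) = 0
      exact LinearMap.congr_fun (hR4 i) u
    · rw [hPsiApp2, hUpsApp2]
      by_cases hji : j = i
      · subst hji
        exact absurd k.isLt (by simp [hcnatii])
      by_cases hk : (k : ℕ) = 0
      · rw [if_pos hk, hPsiApp2]
        have htop : cnat d i j - 1 - ((⟨cnat d i j - 1, Nat.sub_lt k.pos Nat.one_pos⟩ :
            Fin (cnat d i j)) : ℕ) = 0 := by simp
        rw [htop]
        have he : cnat d i j - 1 - (k : ℕ) = cnat d i j - 1 := by omega
        rw [he, lpow_apply_comm]
        have he2 : x i i (QChar.lpow (x i i) (cnat d i j - 1) u)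
            = QChar.lpow (x i i) (cnat d i j) u := by
          have h3 : cnat d i j = (cnat d i j - 1) + 1 := by omega
          conv_rhs => rw [h3]
          rfl
        rw [he2]
        have hr := LinearMap.congr_fun (hR1 i j (Ne.symm hji)) u
        simp only [LinearMap.add_apply, LinearMap.comp_apply, LinearMap.zero_apply] at hr
        exact eq_neg_of_add_eq_zero_right hr
      · rw [if_neg hk, hPsiApp2]
        have he : cnat d i j - 1 - (k : ℕ) + 1 = cnat d i j - 1 - ((k : ℕ) - 1) := by
          have := k.isLt; omega
        rw [lpow_apply_comm, ← he]
        rfl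
  have hPsiLpow : ∀ (n : ℕ) u, Ψ (lpow (x i i) n u) = lpow Υ n (Ψ u) := by
    intro n
    induction n with
    | zero => intro u; rfl
    | succ n ih =>
      intro u
      show Ψ (x i i (QChar.lpow (x i i) n u)) = Υ (QChar.lpow Υ n (Ψ u))
      rw [hPsiX, ih]
  have hPrjPsi : ∀ j, 0 < cnat d i j → ∀ u, prj d Vt Wt i j (Ψ u) = x j i u := by
    intro j h u
    rw [hprjApp j h, hPsiApp2]
    have he : cnat d i j - 1 - ((⟨cnat d i j - 1, Nat.sub_lt h Nat.one_pos⟩ :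
        Fin (cnat d i j)) : ℕ) = 0 := by simp
    rw [he]
    rfl
  have hLpowUpsComp : ∀ (m : ℕ) p j (k : Fin (cnat d i j)) (_ : m ≤ (k : ℕ)),
      (lpow Υ m p).2 j k = p.2 j ⟨(k : ℕ) - m, lt_of_le_of_lt (Nat.sub_le _ _) k.isLt⟩ := by
    intro m
    induction m with
    | zero =>
      intro p j k hm
      have he : (⟨(k : ℕ) - 0, lt_of_le_of_lt (Nat.sub_le _ _) k.isLt⟩ : Fin (cnat d i j)) = k :=
        Fin.ext (Nat.sub_zero _)
      rw [he]
      rfl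
    | succ m ih =>
      intro p j k hm
      show (Υ (QChar.lpow Υ m p)).2 j k = _
      rw [hUpsApp2, if_neg (by omega)]
      rw [ih p j ⟨(k : ℕ) - 1, lt_of_le_of_lt (Nat.sub_le _ _) k.isLt⟩
        (by show m ≤ (k : ℕ) - 1; omega)]
      exact congrArg (p.2 j) (Fin.ext (by simp only [Fin.val_mk]; omega))
  have hPhiUps : ∀ p, Φ (Υ p) = x i i (Φ p) := by
    intro p
    rw [hPhiApp, hPhiApp]
    have h1 : A i (Υ p).1 = 0 := by
      have h2 : (Υ p).1 = 0 := rfl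
      rw [h2, map_zero]
    have hA0 : x i i (A i p.1) = 0 := LinearMap.congr_fun (hR3 i) p.1
    rw [h1, zero_add, map_add, hA0, zero_add, map_sum]
    refine Finset.sum_congr rfl fun j _ => ?_
    rw [map_sum]
    by_cases hn : cnat d i j = 0
    · rw [Finset.sum_eq_zero (fun (k : Fin (cnat d i j)) _ => absurd k.isLt (by omega)),
          Finset.sum_eq_zero (fun (k : Fin (cnat d i j)) _ => absurd k.isLt (by omega))]
    by_cases hji : j = i
    · exact absurd (by rw [hji]; exact hcnatii i) hn
    obtain ⟨m0, hm0⟩ : ∃ m0, cnat d i j = m0 + 1 := ⟨cnat d i j - 1, by omega⟩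
    refine Finset.sum_nbij' (fun k : Fin (cnat d i j) =>
        if _ : (k : ℕ) = 0 then (⟨cnat d i j - 1, by omega⟩ : Fin (cnat d i j))
        else ⟨(k : ℕ) - 1, by have := k.isLt; omega⟩)
      (fun k : Fin (cnat d i j) =>
        if _ : (k : ℕ) = cnat d i j - 1 then (⟨0, by omega⟩ : Fin (cnat d i j))
        else ⟨(k : ℕ) + 1, by have := k.isLt; omega⟩)
      (fun _ _ => Finset.mem_univ _) (fun _ _ => Finset.mem_univ _)
      ?_ ?_ ?_
    · intro k _
      by_cases hk : (k : ℕ) = 0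
      · rw [dif_pos hk, dif_pos (by simp only [Fin.val_mk])]
        exact Fin.ext (by simp only [Fin.val_mk]; omega)
      · rw [dif_neg hk, dif_neg (by simp only [Fin.val_mk]; have := k.isLt; omega)]
        exact Fin.ext (by simp only [Fin.val_mk]; omega)
    · intro k _
      by_cases hk : (k : ℕ) = cnat d i j - 1
      · rw [dif_pos hk, dif_pos (by simp only [Fin.val_mk])]
        exact Fin.ext (by simp only [Fin.val_mk]; omega)
      · rw [dif_neg hk, dif_neg (by simp only [Fin.val_mk]; omega)]
        exact Fin.ext (by simp only [Fin.val_mk]; omega)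
    · intro k _
      by_cases hk : (k : ℕ) = 0
      · have hcomp : (Υ p).2 j k =
            -(QChar.lpow (x j j) (cnat d j i)
              (p.2 j ⟨cnat d i j - 1, Nat.sub_lt k.pos Nat.one_pos⟩)) := by
          rw [hUpsApp2]
          exact if_pos hk
        rw [dif_pos hk, hcomp]
        set q := p.2 j ⟨cnat d i j - 1, Nat.sub_lt k.pos Nat.one_pos⟩ with hqdef
        have hq := LinearMap.congr_fun (hR1 j i hji) q
        simp only [LinearMap.add_apply, LinearMap.comp_apply, LinearMap.zero_apply] at hq
        have hexp : ∀ z : Vt i, x i i (QChar.lpow (x i i) (cnat d i j - 1) z)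
            = QChar.lpow (x i i) (cnat d i j) z := by
          intro z
          conv_rhs => rw [show cnat d i j = (cnat d i j - 1) + 1 from by omega]
          rfl
        have hlk : QChar.lpow (x i i) ((k : ℕ)) (x i j (-(QChar.lpow (x j j) (cnat d j i) q)))
            = -(x i j (QChar.lpow (x j j) (cnat d j i) q)) := by
          rw [hk]
          show x i j (-(QChar.lpow (x j j) (cnat d j i) q)) = _
          rw [map_neg]
        rw [hlk]
        refine (neg_eq_of_add_eq_zero_left hq).trans ?_
        exact (hexp (x i j q)).symm
      · have hcomp : (Υ p).2 j k = p.2 j ⟨(k : ℕ) - 1,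
            lt_of_le_of_lt (Nat.sub_le _ _) k.isLt⟩ := by
          rw [hUpsApp2]
          exact if_neg hk
        rw [dif_neg hk, hcomp]
        have hexp : ∀ z : Vt i, x i i (QChar.lpow (x i i) ((k : ℕ) - 1) z)
            = QChar.lpow (x i i) (k : ℕ) z := by
          intro z
          conv_rhs => rw [show (k : ℕ) = ((k : ℕ) - 1) + 1 from by omega]
          rfl
        exact (hexp (x i j (p.2 j ⟨(k : ℕ) - 1,
          lt_of_le_of_lt (Nat.sub_le _ _) k.isLt⟩))).symm
  have hcastUo : ∀ j, ∀ {a b : ℤ} {u : Vt j}, a = b → u ∈ Uo j a → u ∈ Uo j b := by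
    intro j a b u h hu
    exact h ▸ hu
  have hcastVg : ∀ j, ∀ {a b : ℤ} {u : Vt j}, a = b → u ∈ Vg j a → u ∈ Vg j b := by
    intro j a b u h hu
    exact h ▸ hu
  have hcastWg : ∀ {a b : ℤ} {u : Wt i}, a = b → u ∈ Wg i a → u ∈ Wg i b := by
    intro a b u h hu
    exact h ▸ hu
  have hcastUi : ∀ {a b : ℤ} {u}, a = b → u ∈ Ui a → u ∈ Ui b := by
    intro a b u h hu
    exact h ▸ hu
  have hxg' : ∀ j' j a u, u ∈ Vg j a → x j' j u ∈ Vg j' (a - d j j') :=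
    fun j' j a u hu => hxg j' j a ⟨u, hu, rfl⟩
  have hlpowg' : ∀ j (n : ℕ) a u, u ∈ Vg j a → lpow (x j j) n u ∈ Vg j (a - n * d j j) :=
    fun j n a u hu => hlpowg j n a ⟨u, hu, rfl⟩
  have hAg' : ∀ a w0, w0 ∈ Wg i a → A i w0 ∈ Vg i (a + dl d i) :=
    fun a w0 hw0 => hAg i a ⟨w0, hw0, rfl⟩
  have hUoX' : ∀ j j', j ≠ i → j' ≠ i → ∀ a u, u ∈ Uo j' a → x j j' u ∈ Uo j (a - d j' j) :=
    fun j j' h h' a u hu => hUoX j j' h h' a ⟨u, hu, rfl⟩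
  have hUoLpow : ∀ j, j ≠ i → ∀ (n : ℕ) a u, u ∈ Uo j a →
      lpow (x j j) n u ∈ Uo j (a - n * d j j) := by
    intro j hj n
    induction n with
    | zero =>
      intro a u hu
      exact hcastUo j (by push_cast; ring) hu
    | succ n ih =>
      intro a u hu
      have h1 := hUoX' j j hj hj _ _ (ih a u hu)
      exact hcastUo j (by push_cast; ring) h1
  have hnd1 : ∀ j, j ≠ i → (cnat d i j : ℤ) * d i i = -2 * d i j := by
    intro j hj
    rw [hcnat_cast i j (Ne.symm hj)]
    calc (-cc d i j) * d i i = -(cc d i j * d i i) := by ring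
    _ = -(2 * d i j) := by rw [hccmul]
    _ = -2 * d i j := by ring
  have hnd2 : ∀ j, j ≠ i → (cnat d j i : ℤ) * d j j = -2 * d i j := by
    intro j hj
    rw [hcnat_cast j i hj]
    calc (-cc d j i) * d j j = -(cc d j i * d j j) := by ring
    _ = -(2 * d j i) := by rw [hccmul]
    _ = -2 * d i j := by rw [hdsymm j i]; ring
  have hUpsPm : ∀ a p, p ∈ Pm a → Υ p ∈ Pm (a - d i i) := by
    intro a p hp
    rw [hPmMem] at hp ⊢
    obtain ⟨hp1, hp2⟩ := hp
    refine ⟨by rw [show (Υ p).1 = 0 from rfl]; exact Submodule.zero_mem _, ?_⟩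
    intro j k
    by_cases hji : j = i
    · exact absurd k.isLt (by have h0 : cnat d i j = 0 := (by rw [hji]; exact hcnatii i); omega)
    rw [hUpsApp2]
    by_cases hk : (k : ℕ) = 0
    · rw [if_pos hk]
      refine Submodule.neg_mem _ ?_
      have h1 := hUoLpow j hji (cnat d j i) _ _
        (hp2 j ⟨cnat d i j - 1, Nat.sub_lt k.pos Nat.one_pos⟩)
      refine hcastUo j ?_ h1
      have e1 := hnd1 j hji
      have e2 := hnd2 j hji
      have e3 : ((cnat d i j - 1 : ℕ) : ℤ) = (cnat d i j : ℤ) - 1 := by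
        have := k.pos; omega
      have e4 : ((k : ℕ) : ℤ) = 0 := by omega
      simp only [Fin.val_mk]
      rw [e3, e4]
      linear_combination e1 - e2
    · rw [if_neg hk]
      refine hcastUo j ?_ (hp2 j ⟨(k : ℕ) - 1, lt_of_le_of_lt (Nat.sub_le _ _) k.isLt⟩)
      have e4 : ((((k : ℕ) - 1 : ℕ)) : ℤ) = ((k : ℕ) : ℤ) - 1 := by
        have : 1 ≤ (k : ℕ) := by omega
        omega
      simp only [Fin.val_mk]
      rw [e4]
      ring
  have hPhiPm : ∀ a, (Pm a).map Φ ≤ Vg i (a + d i i) := by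
    intro a
    rintro _ ⟨p, hp, rfl⟩
    replace hp := (hPmMem a p).1 hp
    rw [hPhiApp]
    refine Submodule.add_mem _ ?_
      (Submodule.sum_mem _ fun j _ => Submodule.sum_mem _ fun k _ => ?_)
    · refine hcastVg i ?_ (hAg' _ _ hp.1)
      have := h2dl i
      omega
    · by_cases hji : j = i
      · exact absurd k.isLt (by have h0 : cnat d i j = 0 := (by rw [hji]; exact hcnatii i); omega)
      have h1 := hUoV j hji _ (hp.2 j k)
      have h2 := hxg' i j _ _ h1
      have h3 := hlpowg' i (k : ℕ) _ _ h2
      refine hcastVg i ?_ h3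
      rw [hdsymm j i]
      ring
  have hUpsUi : ∀ (n : ℕ) a u, u ∈ Ui a → lpow Υ n u ∈ Ui (a - n * d i i) := by
    intro n
    induction n with
    | zero =>
      intro a u hu
      exact hcastUi (by push_cast; ring) hu
    | succ n ih =>
      intro a u hu
      have h1 := hupsUi _ ⟨_, ih a u hu, rfl⟩
      exact hcastUi (by push_cast; ring) h1
  have hPsiU : ∀ a p, p ∈ Pm a → Ψ (Φ p) ∈ Ui (a + d i i) := by
    intro a p hp
    replace hp := (hPmMem a p).1 hp
    rw [hPhiApp, map_add, map_sum]
    refine Submodule.add_mem _ ?_ (Submodule.sum_mem _ fun j _ => ?_)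
    · have h1 := hImAi (a + dl d i) ⟨p.1, hp.1, rfl⟩
      refine hcastUi ?_ h1
      have := h2dl i
      omega
    · rw [map_sum]
      refine Submodule.sum_mem _ fun k _ => ?_
      by_cases hji : j = i
      · exact absurd k.isLt (by have h0 : cnat d i j = 0 := (by rw [hji]; exact hcnatii i); omega)
      rw [hPsiLpow]
      have h1 : Ψ (x i j (p.2 j k)) ∈ Ui (a + ((k : ℤ) + 1) * d i i) :=
        hpsiUi j hji _ ⟨p.2 j k, hcastUo j (by ring) (hp.2 j k), rfl⟩
      have h2 := hUpsUi (k : ℕ) _ _ h1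
      exact hcastUi (by push_cast; ring) h2
  have hUiPmle : ∀ a, Ui a ≤ Pm a := by
    intro a u hu
    have hD := hUiD a hu
    rw [Submodule.mem_inf] at hD
    obtain ⟨hD1, hker⟩ := hD
    rw [hPmMem]
    refine ⟨(Submodule.mem_prod.1 hD1).1, ?_⟩
    intro j k
    by_cases hji : j = i
    · exact absurd k.isLt (by have h0 : cnat d i j = 0 := (by rw [hji]; exact hcnatii i); omega)
    have h1 := hUpsUi (cnat d i j - 1 - (k : ℕ)) a u hu
    have h2 := hprjUo j hji _ ⟨_, h1, rfl⟩
    have h3 : prj d Vt Wt i j (lpow Υ (cnat d i j - 1 - (k : ℕ)) u) = u.2 j k := by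
      rw [hprjApp j k.pos, hLpowUpsComp _ _ _ _ (by simp only [Fin.val_mk]; omega)]
      refine congrArg (u.2 j) (Fin.ext ?_)
      simp only [Fin.val_mk]
      have := k.isLt
      omega
    rw [h3] at h2
    refine hcastUo j ?_ h2
    have e1 := hnd1 j hji
    have e3 : ((cnat d i j - 1 - (k : ℕ) : ℕ) : ℤ)
        = (cnat d i j : ℤ) - 1 - ((k : ℕ) : ℤ) := by
      have := k.isLt
      omega
    rw [e3]
    linear_combination -e1
  have hUle : ∀ j a, U j a ≤ Vg j a := by
    intro j a
    by_cases hji : j = i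
    · subst hji
      rw [hUiPm a]
      refine le_trans (hPhiPm (a - d j j)) (le_of_eq ?_)
      congr 1
      ring
    · rw [hUo j hji]
      exact hUoV j hji a
  have hUxii : ∀ a, (U i a).map (x i i) ≤ U i (a - d i i) := by
    intro a
    rintro _ ⟨u0, hu0, rfl⟩
    rw [hUiPm a] at hu0
    obtain ⟨p, hp, rfl⟩ := hu0
    rw [hUiPm (a - d i i)]
    exact ⟨Υ p, hUpsPm _ p hp, hPhiUps p⟩
  have hUxji : ∀ j', j' ≠ i → ∀ a, (U i a).map (x j' i) ≤ Uo j' (a - d i j') := by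
    intro j' hj' a
    rintro _ ⟨u0, hu0, rfl⟩
    rw [hUiPm a] at hu0
    obtain ⟨p, hp, rfl⟩ := hu0
    by_cases h0 : cnat d i j' = 0
    · rw [(hx0 j' hj' h0).1, LinearMap.zero_apply]
      exact Submodule.zero_mem _
    · have h1 := hPsiU (a - d i i) p hp
      have h2 : Ψ (Φ p) ∈ Ui a := hcastUi (by ring) h1
      have h3 := hprjUo j' hj' a ⟨_, h2, rfl⟩
      rw [hPrjPsi j' (by omega)] at h3
      exact h3
  have hUxij : ∀ j, j ≠ i → ∀ a, (Uo j a).map (x i j) ≤ U i (a - d j i) := by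
    intro j hj a
    rintro _ ⟨u0, hu0, rfl⟩
    by_cases h0 : cnat d i j = 0
    · rw [(hx0 j hj h0).2, LinearMap.zero_apply]
      exact Submodule.zero_mem _
    · rw [hUiPm (a - d j i)]
      refine ⟨(0, Pi.single j (Pi.single (⟨0, by omega⟩ : Fin (cnat d i j)) u0)), ?_, ?_⟩
      · rw [SetLike.mem_coe, hPmMem]
        refine ⟨Submodule.zero_mem _, ?_⟩
        intro j'' k
        dsimp only
        by_cases hjj : j'' = j
        · revert k
          rw [hjj]
          intro k
          rw [Pi.single_eq_same]
          by_cases hk : k = (⟨0, by omega⟩ : Fin (cnat d i j))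
          · rw [hk, Pi.single_eq_same]
            refine hcastUo j ?_ hu0
            simp only [Fin.val_mk]
            rw [hdsymm j i]
            push_cast
            ring
          · rw [Pi.single_eq_of_ne hk]
            exact Submodule.zero_mem _
        · rw [Pi.single_eq_of_ne hjj]
          exact Submodule.zero_mem _
      · rw [hPhiApp]
        dsimp only
        rw [map_zero, zero_add]
        rw [Finset.sum_eq_single j]
        · rw [Pi.single_eq_same]
          rw [Finset.sum_eq_single (⟨0, by omega⟩ : Fin (cnat d i j))]
          · rw [Pi.single_eq_same]
            rfl
          · intro k _ hk
            rw [Pi.single_eq_of_ne hk, map_zero, map_zero]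
          · intro h
            exact absurd (Finset.mem_univ _) h
        · intro b _ hb
          refine Finset.sum_eq_zero fun k _ => ?_
          rw [Pi.single_eq_of_ne hb]
          simp
        · intro h
          exact absurd (Finset.mem_univ _) h
  have hUx : ∀ j' j a, (U j a).map (x j' j) ≤ U j' (a - d j j') := by
    intro j' j a
    by_cases hj : j = i
    · rw [hj]
      by_cases hj' : j' = i
      · rw [hj']
        exact hUxii a
      · rw [hUo j' hj']
        exact hUxji j' hj' a
    · by_cases hj' : j' = i
      · rw [hj', hUo j hj]
        exact hUxij j hj a
      · rw [hUo j hj, hUo j' hj']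
        exact hUoX j' j hj' hj a
  have hsub : IsSubrep d Vt Vg x U := ⟨hUle, hUx⟩
  have hUA : ∀ j a, (Wg j a).map (A j) ≤ U j (a + dl d j) := by
    intro j a
    by_cases hj : j = i
    · rw [hj]
      rintro _ ⟨w0, hw0, rfl⟩
      rw [hUiPm (a + dl d i)]
      refine ⟨(w0, 0), ?_, ?_⟩
      · rw [SetLike.mem_coe, hPmMem]
        refine ⟨hcastWg ?_ hw0, fun j'' k => Submodule.zero_mem _⟩
        have := h2dl i
        omega
      · rw [hPhiApp]
        simp
    · rw [hUo j hj]
      exact hImA j hj a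
  have hpos : 0 ≤ pairθ d θ (fun j a => (v j a : ℤ) - dimv Vt U j a) := hstab.2 U hsub hUA
  refine ⟨hsub, hUA, hpos, ?_⟩
  -- Part 4 : the numerical inequality
  haveI instV : ∀ j, FiniteDimensional ℂ (Vt j) := hVfin
  haveI instW : ∀ j, FiniteDimensional ℂ (Wt j) := hWfin
  have hsv : ∀ j, (Function.support fun a : ℤ => ((v j a : ℕ) : ℝ)).Finite := by
    intro j
    refine Set.Finite.subset (hv.preimage ((Prod.mk_right_injective j).injOn)) ?_
    intro a ha
    simp only [Function.mem_support, ne_eq, Nat.cast_eq_zero] at ha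
    exact ha
  have hsw' : (Function.support fun a : ℤ => ((w i a : ℕ) : ℝ)).Finite := by
    refine Set.Finite.subset (hw.preimage ((Prod.mk_right_injective i).injOn)) ?_
    intro a ha
    simp only [Function.mem_support, ne_eq, Nat.cast_eq_zero] at ha
    exact ha
  have hUodim : ∀ j, j ≠ i → ∀ a, finrank ℂ (Uo j a) ≤ v j a := by
    intro j hj a
    calc finrank ℂ (Uo j a) ≤ finrank ℂ (Vg j a) := Submodule.finrank_mono (hUoV j hj a)
    _ = v j a := hvdim j a
  have hsUo : ∀ j, j ≠ i →
      (Function.support fun a : ℤ => ((finrank ℂ (Uo j a) : ℕ) : ℝ)).Finite := by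
    intro j hj
    refine (hsv j).subset ?_
    intro a ha
    simp only [Function.mem_support, ne_eq, Nat.cast_eq_zero] at ha ⊢
    have := hUodim j hj a
    omega
  have hkey : ∀ a : ℤ, finrank ℂ (Ui a) + finrank ℂ (U i (a + d i i)) ≤
      w i (a + dl d i) + ∑ j ∈ Finset.univ.erase i, ∑ k ∈ Finset.range (cnat d i j),
        finrank ℂ (Uo j (a + d i j + ((k : ℤ) + 1) * d i i)) := by
    intro a
    have hre : finrank ℂ (U i (a + d i i)) = finrank ℂ ((Pm a).map Φ) := by
      rw [hUiPm (a + d i i), show a + d i i - d i i = a from by ring]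
    have h1 : finrank ℂ ((Pm a).map Φ)
        = finrank ℂ (LinearMap.range (Φ.domRestrict (Pm a))) := by
      rw [LinearMap.range_domRestrict]
    have h2 : finrank ℂ (Ui a) ≤ finrank ℂ (LinearMap.ker (Φ.domRestrict (Pm a))) := by
      have hle2 : (Ui a).comap (Pm a).subtype ≤ LinearMap.ker (Φ.domRestrict (Pm a)) := by
        intro z hz
        rw [Submodule.mem_comap] at hz
        rw [LinearMap.mem_ker, LinearMap.domRestrict_apply]
        exact LinearMap.mem_ker.1 (Submodule.mem_inf.1 (hUiD a hz)).2
      have heq : finrank ℂ ((Ui a).comap (Pm a).subtype) = finrank ℂ (Ui a) :=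
        LinearEquiv.finrank_eq (Submodule.comapSubtypeEquivOfLe (hUiPmle a))
      rw [← heq]
      exact Submodule.finrank_mono hle2
    have h3 := LinearMap.finrank_range_add_finrank_ker (Φ.domRestrict (Pm a))
    have h4 : finrank ℂ (Pm a) ≤ w i (a + dl d i) +
        ∑ j ∈ Finset.univ.erase i, ∑ k ∈ Finset.range (cnat d i j),
          finrank ℂ (Uo j (a + d i j + ((k : ℤ) + 1) * d i i)) := by
      set Θ : (↥(Wg i (a + dl d i)) × ((j : I) → (k : Fin (cnat d i j)) →
          ↥(Uo j (a + d i j + ((k : ℤ) + 1) * d i i)))) →ₗ[ℂ]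
          (Wt i × ((j : I) → Fin (cnat d i j) → Vt j)) :=
        LinearMap.prodMap (Wg i (a + dl d i)).subtype
          (LinearMap.pi fun j => LinearMap.pi fun k : Fin (cnat d i j) =>
            (Uo j (a + d i j + ((k : ℤ) + 1) * d i i)).subtype ∘ₗ
              LinearMap.proj k ∘ₗ LinearMap.proj j) with hΘ
      have hle3 : Pm a ≤ LinearMap.range Θ := by
        intro p hp
        replace hp := (hPmMem a p).1 hp
        exact ⟨(⟨p.1, hp.1⟩, fun j k => ⟨p.2 j k, hp.2 j k⟩),
          Prod.ext rfl (funext fun j => funext fun k => rfl)⟩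
      have h5 : finrank ℂ (Pm a) ≤ finrank ℂ (LinearMap.range Θ) :=
        Submodule.finrank_mono hle3
      have h6 := LinearMap.finrank_range_le Θ
      have h7 : finrank ℂ (↥(Wg i (a + dl d i)) × ((j : I) → (k : Fin (cnat d i j)) →
          ↥(Uo j (a + d i j + ((k : ℤ) + 1) * d i i))))
          = w i (a + dl d i) + ∑ j ∈ Finset.univ.erase i, ∑ k ∈ Finset.range (cnat d i j),
            finrank ℂ (Uo j (a + d i j + ((k : ℤ) + 1) * d i i)) := by
        rw [Module.finrank_prod, hwdim]
        congr 1
        rw [Module.finrank_pi_fintype]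
        rw [← Finset.add_sum_erase _ _ (Finset.mem_univ i)]
        have hz : finrank ℂ ((k : Fin (cnat d i i)) →
            ↥(Uo i (a + d i i + ((k : ℤ) + 1) * d i i))) = 0 := by
          rw [Module.finrank_pi_fintype]
          exact Finset.sum_eq_zero fun k _ =>
            absurd k.isLt (by have := hcnatii i; omega)
        rw [hz, zero_add]
        refine Finset.sum_congr rfl fun j hj => ?_
        rw [Module.finrank_pi_fintype]
        exact Fin.sum_univ_eq_sum_range
          (fun m => finrank ℂ (Uo j (a + d i j + ((m : ℤ) + 1) * d i i))) (cnat d i j)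
      omega
    omega
  -- support facts for Ui and U i
  have hG2conv : (fun a : ℤ => ((∑ j ∈ Finset.univ.erase i, ∑ k ∈ Finset.range (cnat d i j),
      finrank ℂ (Uo j (a + d i j + ((k : ℤ) + 1) * d i i)) : ℕ) : ℝ))
      = fun a : ℤ => ∑ j ∈ Finset.univ.erase i, ∑ k ∈ Finset.range (cnat d i j),
        ((finrank ℂ (Uo j (a + d i j + ((k : ℤ) + 1) * d i i)) : ℕ) : ℝ) := by
    funext a
    push_cast
    rfl
  have hfin2 : ∀ j ∈ Finset.univ.erase i, ∀ k ∈ Finset.range (cnat d i j),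
      (Function.support fun a : ℤ =>
        ((finrank ℂ (Uo j (a + d i j + ((k : ℤ) + 1) * d i i)) : ℕ) : ℝ)).Finite := by
    intro j hj k _
    have h1 : (fun a : ℤ => ((finrank ℂ (Uo j (a + d i j + ((k : ℤ) + 1) * d i i)) : ℕ) : ℝ))
        = fun a : ℤ => ((finrank ℂ (Uo j (a + (d i j + ((k : ℤ) + 1) * d i i))) : ℕ) : ℝ) :=
      funext fun a => by rw [add_assoc]
    rw [h1]
    exact support_shift (hsUo j (Finset.ne_of_mem_erase hj)) _
  have hGbig : (Function.support fun a : ℤ =>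
      ∑ j ∈ Finset.univ.erase i, ∑ k ∈ Finset.range (cnat d i j),
        ((finrank ℂ (Uo j (a + d i j + ((k : ℤ) + 1) * d i i)) : ℕ) : ℝ)).Finite :=
    support_finsetSum fun j hj => support_finsetSum (hfin2 j hj)
  have hGbig' : (Function.support fun a : ℤ =>
      ((∑ j ∈ Finset.univ.erase i, ∑ k ∈ Finset.range (cnat d i j),
        finrank ℂ (Uo j (a + d i j + ((k : ℤ) + 1) * d i i)) : ℕ) : ℝ)).Finite := by
    rw [hG2conv]
    exact hGbig
  have hwshift : (Function.support fun a : ℤ => ((w i (a + dl d i) : ℕ) : ℝ)).Finite :=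
    support_shift hsw' _
  have hsUiF : (Function.support fun a : ℤ => ((finrank ℂ (Ui a) : ℕ) : ℝ)).Finite := by
    refine Set.Finite.subset (hwshift.union hGbig') ?_
    intro a ha
    simp only [Function.mem_support, ne_eq, Nat.cast_eq_zero] at ha
    simp only [Set.mem_union, Function.mem_support, ne_eq, Nat.cast_eq_zero]
    have := hkey a
    by_contra hcon
    push_neg at hcon
    omega
  have hsUshift : (Function.support fun a : ℤ =>
      ((finrank ℂ (U i (a + d i i)) : ℕ) : ℝ)).Finite := by
    refine Set.Finite.subset (hwshift.union hGbig') ?_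
    intro a ha
    simp only [Function.mem_support, ne_eq, Nat.cast_eq_zero] at ha
    simp only [Set.mem_union, Function.mem_support, ne_eq, Nat.cast_eq_zero]
    have := hkey a
    by_contra hcon
    push_neg at hcon
    omega
  have hsUc : (Function.support fun b : ℤ => ((finrank ℂ (U i b) : ℕ) : ℝ)).Finite := by
    have h1 := support_shift hsUshift (-(d i i))
    have h2 : (fun b : ℤ => ((finrank ℂ (U i (b + -(d i i) + d i i)) : ℕ) : ℝ))
        = fun b : ℤ => ((finrank ℂ (U i b) : ℕ) : ℝ) :=
      funext fun b => by rw [show b + -(d i i) + d i i = b from by ring]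
    rwa [h2] at h1
  have hsU : ∀ j, (Function.support fun a : ℤ => ((finrank ℂ (U j a) : ℕ) : ℝ)).Finite := by
    intro j
    by_cases hj : j = i
    · rw [hj]
      exact hsUc
    · rw [hUo j hj]
      exact hsUo j hj
  -- double-sum computation
  have hDouble : ∀ f : I → ℤ → ℝ,
      (∀ j, j ∈ Finset.univ.erase i → (Function.support (f j)).Finite) →
      (∑ᶠ a : ℤ, ∑ j ∈ Finset.univ.erase i, ∑ k ∈ Finset.range (cnat d i j),
        f j (a + d i j + ((k : ℤ) + 1) * d i i))
      = ∑ j ∈ Finset.univ.erase i, (cnat d i j : ℝ) * ∑ᶠ a : ℤ, f j a := by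
    intro f hf
    have hfin : ∀ j ∈ Finset.univ.erase i, ∀ k ∈ Finset.range (cnat d i j),
        (Function.support fun a : ℤ => f j (a + d i j + ((k : ℤ) + 1) * d i i)).Finite := by
      intro j hj k _
      have h1 : (fun a : ℤ => f j (a + d i j + ((k : ℤ) + 1) * d i i))
          = fun a : ℤ => f j (a + (d i j + ((k : ℤ) + 1) * d i i)) :=
        funext fun a => by rw [add_assoc]
      rw [h1]
      exact support_shift (hf j hj) _
    rw [finsum_finsetSum (fun j hj => support_finsetSum (hfin j hj))]
    refine Finset.sum_congr rfl fun j hj => ?_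
    rw [finsum_finsetSum (hfin j hj)]
    have hper : ∀ k ∈ Finset.range (cnat d i j),
        (∑ᶠ a : ℤ, f j (a + d i j + ((k : ℤ) + 1) * d i i)) = ∑ᶠ a : ℤ, f j a := by
      intro k _
      have h1 : (fun a : ℤ => f j (a + d i j + ((k : ℤ) + 1) * d i i))
          = fun a : ℤ => f j (a + (d i j + ((k : ℤ) + 1) * d i i)) :=
        funext fun a => by rw [add_assoc]
      rw [h1]
      exact finsum_shift _ _
    rw [Finset.sum_congr rfl hper, Finset.sum_const, Finset.card_range, nsmul_eq_mul]
  -- Claim A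
  have hclaimA : (∑ᶠ a : ℤ, ((finrank ℂ (Ui a) : ℕ) : ℝ))
      + (∑ᶠ b : ℤ, ((finrank ℂ (U i b) : ℕ) : ℝ))
      ≤ (∑ᶠ a : ℤ, ((w i a : ℕ) : ℝ)) + ∑ j ∈ Finset.univ.erase i,
        (cnat d i j : ℝ) * ∑ᶠ a : ℤ, ((finrank ℂ (Uo j a) : ℕ) : ℝ) := by
    have h1 : (∑ᶠ b : ℤ, ((finrank ℂ (U i b) : ℕ) : ℝ))
        = ∑ᶠ a : ℤ, ((finrank ℂ (U i (a + d i i)) : ℕ) : ℝ) :=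
      (finsum_shift (fun b => ((finrank ℂ (U i b) : ℕ) : ℝ)) (d i i)).symm
    have h2 : (∑ᶠ a : ℤ, ((w i a : ℕ) : ℝ))
        = ∑ᶠ a : ℤ, ((w i (a + dl d i) : ℕ) : ℝ) :=
      (finsum_shift (fun b => ((w i b : ℕ) : ℝ)) (dl d i)).symm
    rw [h1, h2, ← finsum_add_distrib hsUiF hsUshift,
      ← hDouble _ (fun j hj => hsUo j (Finset.ne_of_mem_erase hj)),
      ← finsum_add_distrib hwshift hGbig]
    refine finsum_mono (Set.Finite.subset (hsUiF.union hsUshift) (Function.support_add _ _))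
      (Set.Finite.subset (hwshift.union hGbig) (Function.support_add _ _)) ?_
    intro a
    have := hkey a
    push_cast
    exact_mod_cast this
  -- rewrite the two pairings
  have hTL : ∀ j, (∑ᶠ a : ℤ, (((v j a : ℤ) - dimv Vt U j a : ℤ) : ℝ))
      = (∑ᶠ a : ℤ, ((v j a : ℕ) : ℝ)) - ∑ᶠ a : ℤ, ((finrank ℂ (U j a) : ℕ) : ℝ) := by
    intro j
    rw [← finsum_sub_distrib' (hsv j) (hsU j)]
    refine finsum_congr fun a => ?_
    simp only [QChar.dimv]
    push_cast
    ring
  have hTRo : ∀ j, j ≠ i → (∑ᶠ a : ℤ,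
      ((SS d w i (fun j' b => (v j' b : ℤ)) j a - dimbar d Vt Wt i Uo Ui j a : ℤ) : ℝ))
      = (∑ᶠ a : ℤ, ((v j a : ℕ) : ℝ)) - ∑ᶠ a : ℤ, ((finrank ℂ (Uo j a) : ℕ) : ℝ) := by
    intro j hj
    rw [← finsum_sub_distrib' (hsv j) (hsUo j hj)]
    refine finsum_congr fun a => ?_
    simp only [QChar.SS, QChar.dimbar, if_neg hj]
    push_cast
    ring
  have hsvshift : (Function.support fun a : ℤ => ((v i (a + d i i) : ℕ) : ℝ)).Finite :=
    support_shift (hsv i) _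
  have hfin2v : ∀ j ∈ Finset.univ.erase i, ∀ k ∈ Finset.range (cnat d i j),
      (Function.support fun a : ℤ =>
        ((v j (a + d i j + ((k : ℤ) + 1) * d i i) : ℕ) : ℝ)).Finite := by
    intro j _ k _
    have h1 : (fun a : ℤ => ((v j (a + d i j + ((k : ℤ) + 1) * d i i) : ℕ) : ℝ))
        = fun a : ℤ => ((v j (a + (d i j + ((k : ℤ) + 1) * d i i)) : ℕ) : ℝ) :=
      funext fun a => by rw [add_assoc]
    rw [h1]
    exact support_shift (hsv j) _
  have hGbigv : (Function.support fun a : ℤ =>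
      ∑ j ∈ Finset.univ.erase i, ∑ k ∈ Finset.range (cnat d i j),
        ((v j (a + d i j + ((k : ℤ) + 1) * d i i) : ℕ) : ℝ)).Finite :=
    support_finsetSum fun j hj => support_finsetSum (hfin2v j hj)
  have hTRi : (∑ᶠ a : ℤ,
      ((SS d w i (fun j' b => (v j' b : ℤ)) i a - dimbar d Vt Wt i Uo Ui i a : ℤ) : ℝ))
      = ((∑ᶠ a : ℤ, ((w i a : ℕ) : ℝ)) + ∑ j ∈ Finset.univ.erase i,
          (cnat d i j : ℝ) * ∑ᶠ a : ℤ, ((v j a : ℕ) : ℝ))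
        - (∑ᶠ a : ℤ, ((v i a : ℕ) : ℝ)) - ∑ᶠ a : ℤ, ((finrank ℂ (Ui a) : ℕ) : ℝ) := by
    have hstep : (∑ᶠ a : ℤ,
        ((SS d w i (fun j' b => (v j' b : ℤ)) i a - dimbar d Vt Wt i Uo Ui i a : ℤ) : ℝ))
        = ∑ᶠ a : ℤ, ((((w i (a + dl d i) : ℕ) : ℝ)
            + ∑ j ∈ Finset.univ.erase i, ∑ k ∈ Finset.range (cnat d i j),
              ((v j (a + d i j + ((k : ℤ) + 1) * d i i) : ℕ) : ℝ))
          - ((v i (a + d i i) : ℕ) : ℝ) - ((finrank ℂ (Ui a) : ℕ) : ℝ)) := by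
      refine finsum_congr fun a => ?_
      simp only [QChar.SS, QChar.dimbar, if_pos rfl]
      push_cast
      ring
    rw [hstep]
    have hs12 : (Function.support fun a : ℤ => (((w i (a + dl d i) : ℕ) : ℝ)
        + ∑ j ∈ Finset.univ.erase i, ∑ k ∈ Finset.range (cnat d i j),
          ((v j (a + d i j + ((k : ℤ) + 1) * d i i) : ℕ) : ℝ))).Finite :=
      Set.Finite.subset (hwshift.union hGbigv) (Function.support_add _ _)
    have hs123 : (Function.support fun a : ℤ => ((((w i (a + dl d i) : ℕ) : ℝ)
        + ∑ j ∈ Finset.univ.erase i, ∑ k ∈ Finset.range (cnat d i j),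
          ((v j (a + d i j + ((k : ℤ) + 1) * d i i) : ℕ) : ℝ))
        - ((v i (a + d i i) : ℕ) : ℝ))).Finite := by
      refine Set.Finite.subset (hs12.union hsvshift) ?_
      intro a ha
      simp only [Function.mem_support, ne_eq] at ha
      simp only [Set.mem_union, Function.mem_support, ne_eq]
      by_contra hcon
      push_neg at hcon
      exact ha (by rw [hcon.1, hcon.2, sub_zero])
    rw [show (fun a : ℤ => ((((w i (a + dl d i) : ℕ) : ℝ)
        + ∑ j ∈ Finset.univ.erase i, ∑ k ∈ Finset.range (cnat d i j),
          ((v j (a + d i j + ((k : ℤ) + 1) * d i i) : ℕ) : ℝ))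
        - ((v i (a + d i i) : ℕ) : ℝ) - ((finrank ℂ (Ui a) : ℕ) : ℝ)))
      = fun a : ℤ => (((((w i (a + dl d i) : ℕ) : ℝ)
        + ∑ j ∈ Finset.univ.erase i, ∑ k ∈ Finset.range (cnat d i j),
          ((v j (a + d i j + ((k : ℤ) + 1) * d i i) : ℕ) : ℝ))
        - ((v i (a + d i i) : ℕ) : ℝ)) - ((finrank ℂ (Ui a) : ℕ) : ℝ)) from rfl]
    rw [finsum_sub_distrib' hs123 hsUiF]
    congr 1
    rw [finsum_sub_distrib' hs12 hsvshift]
    congr 1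
    · rw [finsum_add_distrib hwshift hGbigv]
      congr 1
      · exact finsum_shift (fun b => ((w i b : ℕ) : ℝ)) (dl d i)
      · exact hDouble (fun j a => ((v j a : ℕ) : ℝ)) (fun j _ => hsv j)
    · exact finsum_shift (fun b => ((v i b : ℕ) : ℝ)) (d i i)
  -- cast identities
  have hsrefi : sref d i θ i = -θ i := by
    simp only [QChar.sref]
    have h := hccii i
    rw [h]
    push_cast
    ring
  have hdlpos : (0 : ℝ) < (dl d i : ℤ) := by
    have h1 := h2dl i
    have h2 := hd.pos i
    have : (0 : ℤ) < dl d i := by omega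
    exact_mod_cast this
  have he7 : ∀ j, j ≠ i → ((dl d j : ℤ) : ℝ) * ((cc d j i : ℤ) : ℝ)
      + ((dl d i : ℤ) : ℝ) * ((cnat d i j : ℕ) : ℝ) = 0 := by
    intro j hj
    have h1 : (dl d j) * (cc d j i) + (dl d i) * ((cnat d i j : ℕ) : ℤ) = 0 := by
      rw [hcnat_cast i j (Ne.symm hj), hdlcc j i]
      have h2 := hdlcc i j
      have h3 := hdsymm j i
      linear_combination h3 - h2
    exact_mod_cast congrArg (fun z : ℤ => (z : ℝ)) h1
  -- final assembly
  show (∑ j : I, ((dl d j : ℤ) : ℝ) * θ j * ∑ᶠ a : ℤ,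
      (((v j a : ℤ) - dimv Vt U j a : ℤ) : ℝ))
    ≤ ∑ j : I, ((dl d j : ℤ) : ℝ) * sref d i θ j * ∑ᶠ a : ℤ,
      ((SS d w i (fun j' b => (v j' b : ℤ)) j a - dimbar d Vt Wt i Uo Ui j a : ℤ) : ℝ)
  rw [← Finset.add_sum_erase _ _ (Finset.mem_univ i),
    ← Finset.add_sum_erase _ _ (Finset.mem_univ i)]
  rw [hTL i, hTRi, hsrefi]
  have hLsum : ∑ j ∈ Finset.univ.erase i, ((dl d j : ℤ) : ℝ) * θ j * ∑ᶠ a : ℤ,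
      (((v j a : ℤ) - dimv Vt U j a : ℤ) : ℝ)
      = ∑ j ∈ Finset.univ.erase i, ((dl d j : ℤ) : ℝ) * θ j *
        ((∑ᶠ a : ℤ, ((v j a : ℕ) : ℝ)) - ∑ᶠ a : ℤ, ((finrank ℂ (Uo j a) : ℕ) : ℝ)) := by
    refine Finset.sum_congr rfl fun j hj => ?_
    have hj' := Finset.ne_of_mem_erase hj
    rw [hTL j, hUo j hj']
  have hRsum : ∑ j ∈ Finset.univ.erase i, ((dl d j : ℤ) : ℝ) * sref d i θ j * ∑ᶠ a : ℤ,
      ((SS d w i (fun j' b => (v j' b : ℤ)) j a - dimbar d Vt Wt i Uo Ui j a : ℤ) : ℝ)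
      = (∑ j ∈ Finset.univ.erase i, ((dl d j : ℤ) : ℝ) * θ j *
          ((∑ᶠ a : ℤ, ((v j a : ℕ) : ℝ)) - ∑ᶠ a : ℤ, ((finrank ℂ (Uo j a) : ℕ) : ℝ)))
        + θ i * (((dl d i : ℤ) : ℝ) *
          ∑ j ∈ Finset.univ.erase i, (cnat d i j : ℝ) *
            ((∑ᶠ a : ℤ, ((v j a : ℕ) : ℝ)) - ∑ᶠ a : ℤ, ((finrank ℂ (Uo j a) : ℕ) : ℝ))) := by
    rw [Finset.mul_sum, Finset.mul_sum, ← Finset.sum_add_distrib]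
    refine Finset.sum_congr rfl fun j hj => ?_
    have hj' := Finset.ne_of_mem_erase hj
    rw [hTRo j hj']
    simp only [QChar.sref]
    have h7 := he7 j hj'
    linear_combination (-(θ i) * ((∑ᶠ a : ℤ, ((v j a : ℕ) : ℝ))
      - ∑ᶠ a : ℤ, ((finrank ℂ (Uo j a) : ℕ) : ℝ))) * h7
  rw [hLsum, hRsum]
  have hA2 : ∑ j ∈ Finset.univ.erase i, (cnat d i j : ℝ) *
      ((∑ᶠ a : ℤ, ((v j a : ℕ) : ℝ)) - ∑ᶠ a : ℤ, ((finrank ℂ (Uo j a) : ℕ) : ℝ))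
      = (∑ j ∈ Finset.univ.erase i, (cnat d i j : ℝ) * ∑ᶠ a : ℤ, ((v j a : ℕ) : ℝ))
        - ∑ j ∈ Finset.univ.erase i, (cnat d i j : ℝ) *
          ∑ᶠ a : ℤ, ((finrank ℂ (Uo j a) : ℕ) : ℝ) := by
    rw [← Finset.sum_sub_distrib]
    exact Finset.sum_congr rfl fun j _ => by ring
  rw [hA2]
  have hkeyfin := hclaimA
  nlinarith [mul_nonneg (mul_nonneg (neg_nonneg.2 hθi.le) hdlpos.le)
    (by linarith : (0 : ℝ) ≤ (∑ᶠ a : ℤ, ((w i a : ℕ) : ℝ))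
      + (∑ j ∈ Finset.univ.erase i, (cnat d i j : ℝ) *
        ∑ᶠ a : ℤ, ((finrank ℂ (Uo j a) : ℕ) : ℝ))
      - (∑ᶠ a : ℤ, ((finrank ℂ (Ui a) : ℕ) : ℝ))
      - ∑ᶠ b : ℤ, ((finrank ℂ (U i b) : ℕ) : ℝ))]
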